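/- The number of ordered pairs of positive integers (m, n) with 1 ≤ m ≤ 100 and 1 ≤ n ≤ 100 for which there exists a real number x with 0 < x < 1, x ≠ 1/2, and m·arcsin(x/2) + n·arcsin((1 − x)/2) = π, is equal to 940. -/

import Mathlib

open Real

lemma my_lt_arcsin {t : ℝ} (h0 : 0 < t) (h1 : t ≤ 1) : t < Real.arcsin t := by
  have h := Real.sin_lt (x := Real.arcsin t) (Real.arcsin_pos.2 h0)
  rwa [Real.sin_arcsin (by linarith) h1] at h

lemma my_arcsin_half : Real.arcsin (1/2) = π/6 := by
  rw [← Real.sin_pi_div_six, Real.arcsin_sin] <;> nlinarith [Real.pi_pos]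

lemma my_arcsin_quarter_lt : Real.arcsin (1/4) < π/12 := by
  have hb : (0:ℝ) < π/12 := by positivity
  have hc := Real.sin_gt_sub_cube hb
  have h1 : (1:ℝ)/4 < Real.sin (π/12) := by nlinarith [Real.pi_gt_d2, Real.pi_lt_d2, Real.pi_pos, sq_nonneg (π - 3.14), mul_pos Real.pi_pos Real.pi_pos]
  have h2 : Real.arcsin (1/4) < Real.arcsin (Real.sin (π/12)) :=
    Real.strictMonoOn_arcsin ⟨by norm_num, by norm_num⟩
      ⟨Real.neg_one_le_sin _, Real.sin_le_one _⟩ h1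
  rwa [Real.arcsin_sin (by nlinarith [Real.pi_pos]) (by nlinarith [Real.pi_pos])] at h2

lemma my_arcsin_small : Real.arcsin (1/20000) < 1/10000 := by
  have hc := Real.sin_gt_sub_cube (show (0:ℝ) < 1/10000 by norm_num)
  have h1 : (1:ℝ)/20000 < Real.sin (1/10000) := by nlinarith
  have h2 : Real.arcsin (1/20000) < Real.arcsin (Real.sin (1/10000)) :=
    Real.strictMonoOn_arcsin ⟨by norm_num, by norm_num⟩
      ⟨Real.neg_one_le_sin _, Real.sin_le_one _⟩ h1
  rwa [Real.arcsin_sin (by nlinarith [Real.pi_gt_d2]) (by nlinarith [Real.pi_gt_d2])] at h2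

lemma my_arcsin_seventh : π/7 < Real.arcsin (99/200) := by
  have h1 : Real.sin (π/7) < 99/200 := by
    have := Real.sin_lt (x := π/7) (by positivity)
    nlinarith [Real.pi_lt_d2]
  have h2 : Real.arcsin (Real.sin (π/7)) < Real.arcsin (99/200) :=
    Real.strictMonoOn_arcsin ⟨Real.neg_one_le_sin _, Real.sin_le_one _⟩
      ⟨by norm_num, by norm_num⟩ h1
  rwa [Real.arcsin_sin (by nlinarith [Real.pi_pos]) (by nlinarith [Real.pi_pos])] at h2

lemma my_superadd {x : ℝ} (h0 : 0 < x) (h1 : x < 1) :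
    Real.arcsin (x/2) + Real.arcsin ((1-x)/2) < π/6 := by
  have hpi := Real.pi_pos
  set a := x/2 with ha
  set b := (1-x)/2 with hb
  have ha0 : 0 < a := by simp [ha]; linarith
  have ha1 : a < 1/2 := by simp [ha]; linarith
  have hb0 : 0 < b := by simp [hb]; linarith
  have hb1 : b < 1/2 := by simp [hb]; linarith
  have hmono : Real.arcsin a ≤ π/6 := by
    have := Real.monotone_arcsin (le_of_lt ha1)
    rwa [show Real.arcsin (1/2) = π/6 by
      rw [← Real.sin_pi_div_six, Real.arcsin_sin] <;> nlinarith] at this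
  have hmono' : Real.arcsin b ≤ π/6 := by
    have := Real.monotone_arcsin (le_of_lt hb1)
    rwa [show Real.arcsin (1/2) = π/6 by
      rw [← Real.sin_pi_div_six, Real.arcsin_sin] <;> nlinarith] at this
  have hα : 0 < Real.arcsin a := Real.arcsin_pos.2 ha0
  have hβ : 0 < Real.arcsin b := Real.arcsin_pos.2 hb0
  have hs : Real.sin (Real.arcsin a + Real.arcsin b)
      = a * Real.cos (Real.arcsin b) + Real.cos (Real.arcsin a) * b := by
    rw [Real.sin_add, Real.sin_arcsin (by linarith) (by linarith),
      Real.sin_arcsin (by linarith) (by linarith)]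
  have hca : Real.cos (Real.arcsin a) < 1 := by
    have hb1' : -(2*π) < Real.arcsin a := by nlinarith [Real.neg_pi_div_two_le_arcsin a]
    have hb2' : Real.arcsin a < 2*π := by nlinarith [Real.arcsin_le_pi_div_two a]
    rcases lt_or_eq_of_le (Real.cos_le_one (Real.arcsin a)) with h|h
    · exact h
    · exfalso
      have h' : Real.arcsin a = 0 := (Real.cos_eq_one_iff_of_lt_of_lt hb1' hb2').1 h
      linarith
  have hcb : Real.cos (Real.arcsin b) ≤ 1 := Real.cos_le_one _
  have hcb0 : 0 ≤ Real.cos (Real.arcsin b) := by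
    apply Real.cos_nonneg_of_mem_Icc
    exact ⟨Real.neg_pi_div_two_le_arcsin b, Real.arcsin_le_pi_div_two b⟩
  have hlt : Real.sin (Real.arcsin a + Real.arcsin b) < Real.sin (π/6) := by
    rw [hs, Real.sin_pi_div_six]
    have hab : a + b = 1/2 := by rw [ha, hb]; ring
    nlinarith
  have h₁ : Real.arcsin a + Real.arcsin b ∈ Set.Icc (-(π/2)) (π/2) := by
    constructor <;> [nlinarith; nlinarith]
  have h₂ : π/6 ∈ Set.Icc (-(π/2)) (π/2) := by constructor <;> nlinarith
  exact (Real.strictMonoOn_sin.lt_iff_lt h₁ h₂).1 hlt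

set_option maxHeartbeats 1000000 in
lemma my_tangent {t : ℝ} (h0 : 0 ≤ t) (h1 : t ≤ 1/2) :
    π/6 - (233/200) * (1/2 - t) ≤ Real.arcsin t := by
  have hpi := Real.pi_gt_d2
  have hpi' := Real.pi_lt_d2
  set u := (233/200) * (1/2 - t) with hu
  have hu0 : 0 ≤ u := by rw [hu]; nlinarith
  rcases le_or_gt (π/6) u with hcase | hcase
  · have := Real.arcsin_nonneg.2 h0
    linarith
  · -- u < π/6 ≤ 0.525
    have hu1 : u ≤ 0.525 := by nlinarith
    have hkey : Real.sin (π/6 - u) ≤ t := by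
      rcases eq_or_lt_of_le hu0 with h | h
      · have ht : t = 1/2 := by rw [hu] at h; nlinarith
        rw [← h, sub_zero, Real.sin_pi_div_six, ht]
      · have hs1 : u - u^3/4 < Real.sin u := by
            have := Real.sin_gt_sub_cube h; nlinarith [pow_pos h 3]
        have hs2 : u/2 - (u/2)^3/4 < Real.sin (u/2) :=
          by have := Real.sin_gt_sub_cube (x := u/2) (by linarith); nlinarith [pow_pos h 3]
        have hL : 0 < u/2 - (u/2)^3/4 := by nlinarith [mul_pos h h]
        have hsq : (u/2 - (u/2)^3/4)^2 ≤ Real.sin (u/2)^2 := by nlinarith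
        have hcos : Real.cos u = 1 - 2 * Real.sin (u/2)^2 := by
          have h2 := Real.sin_sq_eq_half_sub (u/2)
          have h3 : 2*(u/2) = u := by ring
          rw [h3] at h2
          linarith
        have h3 : Real.sin (π/6 - u)
            = (1/2) * Real.cos u - (Real.sqrt 3/2) * Real.sin u := by
          rw [Real.sin_sub, Real.sin_pi_div_six, Real.cos_pi_div_six]
        have hsqrt3 : Real.sqrt 3 ^ 2 = 3 := Real.sq_sqrt (by norm_num)
        have hsqrt3' : (1.732:ℝ) ≤ Real.sqrt 3 := by
          nlinarith [Real.sqrt_nonneg 3]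
        have hupos : 0 ≤ u - u^3/4 := by nlinarith [mul_pos h h]
        have hmul : (1.732:ℝ) * (u - u^3/4) ≤ Real.sqrt 3 * (u - u^3/4) :=
          mul_le_mul_of_nonneg_right hsqrt3' hupos
        have hmul2 : Real.sqrt 3 * (u - u^3/4) ≤ Real.sqrt 3 * Real.sin u :=
          mul_le_mul_of_nonneg_left (le_of_lt hs1) (Real.sqrt_nonneg 3)
        have ht : t = 1/2 - (200/233) * u := by rw [hu]; ring
        have hgoal : (1:ℝ)/2 * (1 - 2 * Real.sin (u/2)^2) - Real.sqrt 3/2 * Real.sin u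
            ≤ 1/2 - (200/233) * u := by
          nlinarith [hsq, hmul, hmul2, mul_pos h h, hu1, h]
        rw [h3, hcos, ht]
        exact hgoal
    calc π/6 - u = Real.arcsin (Real.sin (π/6 - u)) := by
          rw [Real.arcsin_sin (by nlinarith) (by nlinarith)]
      _ ≤ Real.arcsin t := Real.monotone_arcsin hkey

-- case C : m = 6, n ≥ 7
lemma my_caseC {n : ℕ} (hn : 7 ≤ n) {x : ℝ} (hx0 : 0 < x) (hx1 : x < 1) :
    π < 6 * Real.arcsin (x/2) + (n:ℝ) * Real.arcsin ((1-x)/2) := by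
  have h1 : π/6 - (233/200) * (1/2 - x/2) ≤ Real.arcsin (x/2) :=
    my_tangent (by linarith) (by linarith)
  have h2 : (1-x)/2 < Real.arcsin ((1-x)/2) := my_lt_arcsin (by linarith) (by linarith)
  have h3 : (7:ℝ) ≤ (n:ℝ) := by exact_mod_cast hn
  have h4 : 0 < Real.arcsin ((1-x)/2) := by linarith
  have h5 : (7:ℝ) * Real.arcsin ((1-x)/2) ≤ (n:ℝ) * Real.arcsin ((1-x)/2) :=
    mul_le_mul_of_nonneg_right h3 (le_of_lt h4)
  nlinarith

lemma my_no_sol {m n : ℕ} (hm1 : 1 ≤ m) (hn1 : 1 ≤ n)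
    (hA : ¬(m ≤ 5 ∧ 7 ≤ n)) (hB : ¬(n ≤ 5 ∧ 7 ≤ m)) {x : ℝ}
    (hx0 : 0 < x) (hx1 : x < 1) :
    (m:ℝ) * Real.arcsin (x/2) + (n:ℝ) * Real.arcsin ((1-x)/2) ≠ π := by
  have ha0 : 0 ≤ Real.arcsin (x/2) := Real.arcsin_nonneg.2 (by linarith)
  have hb0 : 0 ≤ Real.arcsin ((1-x)/2) := Real.arcsin_nonneg.2 (by linarith)
  rcases le_or_gt m 6 with hm6 | hm7 <;> rcases le_or_gt n 6 with hn6 | hn7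
  · -- both ≤ 6 : value < π
    have h := my_superadd hx0 hx1
    have hm : (m:ℝ) ≤ 6 := by exact_mod_cast hm6
    have hn : (n:ℝ) ≤ 6 := by exact_mod_cast hn6
    intro heq
    nlinarith [mul_le_mul_of_nonneg_right hm ha0, mul_le_mul_of_nonneg_right hn hb0]
  · -- m ≤ 6, n ≥ 7 : then m = 6 (since ¬(m≤5∧7≤n))
    have hm6' : m = 6 := by omega
    subst hm6'
    intro heq
    have := my_caseC (by omega : 7 ≤ n) hx0 hx1
    push_cast at heq
    linarith
  · -- m ≥ 7, n ≤ 6 : then n = 6, use symmetry via x ↦ 1 - x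
    have hn6' : n = 6 := by omega
    subst hn6'
    intro heq
    have h := my_caseC (by omega : 7 ≤ m) (x := 1 - x) (by linarith) (by linarith)
    have hx : 1 - (1 - x) = x := by ring
    rw [hx] at h
    push_cast at heq
    linarith
  · -- both ≥ 7 : value > 7/2 > π
    have h1 : x/2 < Real.arcsin (x/2) := my_lt_arcsin (by linarith) (by linarith)
    have h2 : (1-x)/2 < Real.arcsin ((1-x)/2) := my_lt_arcsin (by linarith) (by linarith)
    have hm : (7:ℝ) ≤ (m:ℝ) := by exact_mod_cast hm7
    have hn : (7:ℝ) ≤ (n:ℝ) := by exact_mod_cast hn7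
    intro heq
    have e1 : (7:ℝ) * Real.arcsin (x/2) ≤ (m:ℝ) * Real.arcsin (x/2) :=
      mul_le_mul_of_nonneg_right hm ha0
    have e2 : (7:ℝ) * Real.arcsin ((1-x)/2) ≤ (n:ℝ) * Real.arcsin ((1-x)/2) :=
      mul_le_mul_of_nonneg_right hn hb0
    nlinarith [Real.pi_lt_d2]

lemma my_exists_sol {m n : ℕ} (hm : m ≤ 5) (hn : 7 ≤ n) (hn' : n ≤ 100) :
    ∃ x : ℝ, 0 < x ∧ x < 1 ∧ x ≠ 1/2 ∧
      (m:ℝ) * Real.arcsin (x/2) + (n:ℝ) * Real.arcsin ((1-x)/2) = π := by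
  set f : ℝ → ℝ := fun x => (m:ℝ) * Real.arcsin (x/2) + (n:ℝ) * Real.arcsin ((1-x)/2)
    with hf
  have hcont : ContinuousOn f (Set.Icc (1/100) (9999/10000)) := by
    apply Continuous.continuousOn
    exact (continuous_const.mul (Real.continuous_arcsin.comp (by continuity))).add
      (continuous_const.mul (Real.continuous_arcsin.comp (by continuity)))
  have hm' : (m:ℝ) ≤ 5 := by exact_mod_cast hm
  have hm0 : (0:ℝ) ≤ (m:ℝ) := by positivity
  have hn7 : (7:ℝ) ≤ (n:ℝ) := by exact_mod_cast hn
  have hn100 : (n:ℝ) ≤ 100 := by exact_mod_cast hn'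
  have hfa : π < f (1/100) := by
    have e : f (1/100) = (m:ℝ) * Real.arcsin (1/200) + (n:ℝ) * Real.arcsin (99/200) := by
      rw [hf]; norm_num
    have h1 : 0 ≤ Real.arcsin (1/200) := Real.arcsin_nonneg.2 (by norm_num)
    have h2 := my_arcsin_seventh
    have h3 : 0 < Real.arcsin (99/200) := by nlinarith [Real.pi_pos]
    have h4 : (7:ℝ) * Real.arcsin (99/200) ≤ (n:ℝ) * Real.arcsin (99/200) :=
      mul_le_mul_of_nonneg_right hn7 (le_of_lt h3)
    rw [e]
    nlinarith [mul_nonneg hm0 h1]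
  have hfb : f (9999/10000) < π := by
    have e : f (9999/10000)
        = (m:ℝ) * Real.arcsin (9999/20000) + (n:ℝ) * Real.arcsin (1/20000) := by
      rw [hf]; norm_num
    have h1 : Real.arcsin (9999/20000) ≤ π/6 := by
      rw [← my_arcsin_half]
      exact Real.monotone_arcsin (by norm_num)
    have h1' : 0 ≤ Real.arcsin (9999/20000) := Real.arcsin_nonneg.2 (by norm_num)
    have h2 := my_arcsin_small
    have h2' : 0 ≤ Real.arcsin (1/20000) := Real.arcsin_nonneg.2 (by norm_num)
    have e1 : (m:ℝ) * Real.arcsin (9999/20000) ≤ 5 * (π/6) := by nlinarith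
    have e2 : (n:ℝ) * Real.arcsin (1/20000) ≤ 100 * (1/10000) := by nlinarith
    rw [e]
    nlinarith [Real.pi_gt_d2]
  obtain ⟨x, hx, hfx⟩ := intermediate_value_Icc'
    (by norm_num : (1/100:ℝ) ≤ 9999/10000) hcont ⟨le_of_lt hfb, le_of_lt hfa⟩
  refine ⟨x, by linarith [hx.1], by linarith [hx.2], ?_, hfx⟩
  intro heq
  rw [heq] at hfx
  have e : f (1/2) = ((m:ℝ) + (n:ℝ)) * Real.arcsin (1/4) := by
    rw [hf]; norm_num; ring
  rw [e] at hfx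
  have hq := my_arcsin_quarter_lt
  have hq' : (1:ℝ)/4 < Real.arcsin (1/4) := my_lt_arcsin (by norm_num) (by norm_num)
  rcases le_or_gt (m + n) 12 with h | h
  · have h12 : (m:ℝ) + (n:ℝ) ≤ 12 := by exact_mod_cast h
    have h8 : (1:ℝ) ≤ (m:ℝ) + (n:ℝ) := by
      have : (1:ℕ) ≤ m + n := by omega
      exact_mod_cast this
    nlinarith
  · have h13 : (13:ℝ) ≤ (m:ℝ) + (n:ℝ) := by exact_mod_cast h
    nlinarith [Real.pi_lt_d2]

lemma my_iff {m n : ℕ} (hm1 : 1 ≤ m) (hm2 : m ≤ 100) (hn1 : 1 ≤ n) (hn2 : n ≤ 100) :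
    (∃ x : ℝ, 0 < x ∧ x < 1 ∧ x ≠ 1/2 ∧
      (m:ℝ) * Real.arcsin (x/2) + (n:ℝ) * Real.arcsin ((1-x)/2) = π) ↔
    ((m ≤ 5 ∧ 7 ≤ n) ∨ (n ≤ 5 ∧ 7 ≤ m)) := by
  constructor
  · rintro ⟨x, hx0, hx1, -, heq⟩
    by_contra hc
    push_neg at hc
    obtain ⟨h1, h2⟩ := hc
    exact my_no_sol hm1 hn1
      (by intro ⟨a, b⟩; exact absurd b (by omega))
      (by intro ⟨a, b⟩; exact absurd b (by omega)) hx0 hx1 heq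
  · rintro (⟨h1, h2⟩ | ⟨h1, h2⟩)
    · exact my_exists_sol h1 h2 hn2
    · obtain ⟨x, hx0, hx1, hxh, heq⟩ := my_exists_sol h1 h2 hm2
      refine ⟨1 - x, by linarith, by linarith, by intro h; apply hxh; linarith, ?_⟩
      have e : 1 - (1 - x) = x := by ring
      rw [e]
      linarith

set_option maxRecDepth 4000

open scoped Classical in
theorem stmt_7 :
    Finset.card ((Finset.Icc 1 100 ×ˢ Finset.Icc 1 100).filter
      (fun mn : ℕ × ℕ => ∃ x : ℝ, 0 < x ∧ x < 1 ∧ x ≠ 1 / 2 ∧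
        (mn.1 : ℝ) * Real.arcsin (x / 2) + (mn.2 : ℝ) * Real.arcsin ((1 - x) / 2) =
          Real.pi)) = 940 := by
  have hset : ((Finset.Icc 1 100 ×ˢ Finset.Icc 1 100).filter
      (fun mn : ℕ × ℕ => ∃ x : ℝ, 0 < x ∧ x < 1 ∧ x ≠ 1 / 2 ∧
        (mn.1 : ℝ) * Real.arcsin (x / 2) + (mn.2 : ℝ) * Real.arcsin ((1 - x) / 2) =
          Real.pi))
      = (Finset.Icc 1 5 ×ˢ Finset.Icc 7 100) ∪ (Finset.Icc 7 100 ×ˢ Finset.Icc 1 5) := by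
    ext ⟨m, n⟩
    simp only [Finset.mem_filter, Finset.mem_product, Finset.mem_union, Finset.mem_Icc]
    constructor
    · rintro ⟨⟨⟨hm1, hm2⟩, hn1, hn2⟩, hx⟩
      rcases (my_iff hm1 hm2 hn1 hn2).1 hx with ⟨h1, h2⟩ | ⟨h1, h2⟩
      · exact Or.inl ⟨⟨hm1, h1⟩, h2, hn2⟩
      · exact Or.inr ⟨⟨h2, hm2⟩, hn1, h1⟩
    · rintro (⟨⟨hm1, hm2⟩, hn1, hn2⟩ | ⟨⟨hm1, hm2⟩, hn1, hn2⟩)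
      · exact ⟨⟨⟨hm1, by omega⟩, by omega, hn2⟩,
          (my_iff hm1 (by omega) (by omega) hn2).2 (Or.inl ⟨hm2, hn1⟩)⟩
      · exact ⟨⟨⟨by omega, hm2⟩, hn1, by omega⟩,
          (my_iff (by omega) hm2 hn1 (by omega)).2 (Or.inr ⟨hn2, hm1⟩)⟩
  rw [hset, Finset.card_union_of_disjoint, Finset.card_product, Finset.card_product]
  · simp [Nat.card_Icc]
  · rw [Finset.disjoint_left]
    rintro ⟨m, n⟩ h1 h2
    simp only [Finset.mem_product, Finset.mem_Icc] at h1 h2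
    omega
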